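/- Let R be a commutative Q-algebra and f : ℕ → R[[t]] with t^n dividing f(n) for all n. Then 1 + ∑_{k≥1} ∑_{λ ⊢ k} (-1)^{k - l(λ)} (1/z_λ) ∏_{i=1}^k f(i)^{n_i} = exp(∑_{u≥1} (-1)^{u-1} f(u)/u), where for a partition λ of the integer k with n_i parts equal to i, l(λ) = ∑ n_i and z_λ = ∏_{i=1}^k i^{n_i}·n_i!. -/

import Mathlib

open Finset PowerSeries

set_option linter.unusedSectionVars false
set_option linter.unusedVariables false
set_option maxHeartbeats 2000000

/-- The sum `∑_{k≥0} F k` of a family of formal power series such that `t^k ∣ F k`. -/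
noncomputable def seriesSum {R : Type*} [CommRing R] (F : ℕ → PowerSeries R) :
    PowerSeries R :=
  PowerSeries.mk fun d => ∑ k ∈ Finset.range (d + 1), PowerSeries.coeff (R := R) d (F k)

/-- The formal exponential `exp g = ∑_{s≥0} g^s / s!` for `g` with zero constant term. -/
noncomputable def formalExp {R : Type*} [CommRing R] [Algebra ℚ R] (g : PowerSeries R) :
    PowerSeries R :=
  PowerSeries.mk fun d => ∑ s ∈ Finset.range (d + 1),
    PowerSeries.coeff (R := R) d (algebraMap ℚ (PowerSeries R) (1 / (Nat.factorial s : ℚ)) * g ^ s)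

/-- `z_λ = ∏_{i=1}^k i^{n_i} · n_i!`, where `n_i` is the number of parts of `λ` equal
to `i`. -/
def zCoef {k : ℕ} (l : Nat.Partition k) : ℚ :=
  ∏ i ∈ Finset.Icc 1 k, ((i : ℚ) ^ (l.parts.count i) *
    (Nat.factorial (l.parts.count i) : ℚ))

section Helpers

variable {R : Type*} [CommRing R] [Algebra ℚ R]

lemma coeff_of_X_pow_dvd {φ : PowerSeries R} {n m : ℕ} (h : (X : PowerSeries R) ^ n ∣ φ)
    (hm : m < n) : PowerSeries.coeff (R := R) m φ = 0 :=
  (PowerSeries.X_pow_dvd_iff.mp h) m hm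

lemma coeff_seriesSum (F : ℕ → PowerSeries R) (d : ℕ) :
    PowerSeries.coeff (R := R) d (seriesSum F) = ∑ k ∈ range (d + 1), PowerSeries.coeff (R := R) d (F k) :=
  PowerSeries.coeff_mk _ _

lemma coeff_seriesSum_eq {F : ℕ → PowerSeries R} (hF : ∀ k, (X : PowerSeries R) ^ k ∣ F k)
    {d N : ℕ} (hdN : d < N) :
    PowerSeries.coeff (R := R) d (seriesSum F) = PowerSeries.coeff (R := R) d (∑ k ∈ range N, F k) := by
  rw [coeff_seriesSum, map_sum]
  apply Finset.sum_subset (Finset.range_subset_range.2 hdN)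
  intro k _ hk
  exact coeff_of_X_pow_dvd (hF k) (by simpa using hk)

lemma coeff_formalExp (g : PowerSeries R) (d : ℕ) :
    PowerSeries.coeff (R := R) d (formalExp g) = ∑ s ∈ range (d + 1),
      PowerSeries.coeff (R := R) d (algebraMap ℚ (PowerSeries R) (1 / (Nat.factorial s : ℚ)) * g ^ s) :=
  PowerSeries.coeff_mk _ _

lemma coeff_formalExp_eq {g : PowerSeries R} (hg : PowerSeries.constantCoeff (R := R) g = 0)
    {d N : ℕ} (hdN : d < N) :
    PowerSeries.coeff (R := R) d (formalExp g) = PowerSeries.coeff (R := R) d (∑ s ∈ range N,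
      algebraMap ℚ (PowerSeries R) (1 / (Nat.factorial s : ℚ)) * g ^ s) := by
  have hX : (X : PowerSeries R) ∣ g := PowerSeries.X_dvd_iff.mpr hg
  rw [coeff_formalExp, map_sum]
  apply Finset.sum_subset (Finset.range_subset_range.2 hdN)
  intro s _ hs
  have : (X : PowerSeries R) ^ s ∣
      algebraMap ℚ (PowerSeries R) (1 / (Nat.factorial s : ℚ)) * g ^ s :=
    Dvd.dvd.mul_left (pow_dvd_pow_of_dvd hX s) _
  exact coeff_of_X_pow_dvd this (by simpa using hs)

lemma inv_fact_mul_choose {s j : ℕ} (hj : j ≤ s) :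
    (1 / (Nat.factorial s : ℚ)) * (s.choose j : ℚ) =
      (1 / (Nat.factorial j : ℚ)) * (1 / (Nat.factorial (s - j) : ℚ)) := by
  have h2 : (s.choose j : ℚ) * (Nat.factorial j) * (Nat.factorial (s-j)) = Nat.factorial s := by
    exact_mod_cast congrArg (Nat.cast : ℕ → ℚ) (Nat.choose_mul_factorial_mul_factorial hj)
  field_simp
  linarith [h2]

lemma formalExp_add {g h : PowerSeries R} (hg : PowerSeries.constantCoeff (R := R) g = 0)
    (hh : PowerSeries.constantCoeff (R := R) h = 0) :
    formalExp (g + h) = formalExp g * formalExp h := by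
  have hXg : (X : PowerSeries R) ∣ g := PowerSeries.X_dvd_iff.mpr hg
  have hXh : (X : PowerSeries R) ∣ h := PowerSeries.X_dvd_iff.mpr hh
  ext d
  set E : ℚ →+* PowerSeries R := (algebraMap ℚ (PowerSeries R)) with hE
  set t : ℕ → ℕ → PowerSeries R := fun j l =>
    E (1 / (Nat.factorial j : ℚ)) * g ^ j * (E (1 / (Nat.factorial l : ℚ)) * h ^ l) with ht
  have hdvd : ∀ j l, (X : PowerSeries R) ^ (j + l) ∣ t j l := by
    intro j l
    rw [pow_add]
    exact mul_dvd_mul (Dvd.dvd.mul_left (pow_dvd_pow_of_dvd hXg j) _)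
      (Dvd.dvd.mul_left (pow_dvd_pow_of_dvd hXh l) _)
  have htz : ∀ j l, d < j + l → PowerSeries.coeff (R := R) d (t j l) = 0 := fun j l hd =>
    coeff_of_X_pow_dvd (hdvd j l) hd
  set B := 2 * d + 2 with hB
  set P : Finset (ℕ × ℕ) := range B ×ˢ range B with hP
  have hrhs : PowerSeries.coeff (R := R) d (formalExp g * formalExp h) =
      ∑ p ∈ P, PowerSeries.coeff (R := R) d (t p.1 p.2) := by
    rw [PowerSeries.coeff_mul]
    have step1 : ∀ p ∈ Finset.HasAntidiagonal.antidiagonal d,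
        PowerSeries.coeff (R := R) p.1 (formalExp g) * PowerSeries.coeff (R := R) p.2 (formalExp h) =
        PowerSeries.coeff (R := R) p.1 (∑ s ∈ range (d+1), E (1 / (Nat.factorial s : ℚ)) * g ^ s) *
        PowerSeries.coeff (R := R) p.2 (∑ s ∈ range (d+1), E (1 / (Nat.factorial s : ℚ)) * h ^ s) := by
      intro p hp
      rw [Finset.HasAntidiagonal.mem_antidiagonal] at hp
      rw [coeff_formalExp_eq hg (by omega : p.1 < d + 1),
        coeff_formalExp_eq hh (by omega : p.2 < d + 1)]
    rw [Finset.sum_congr rfl step1, ← PowerSeries.coeff_mul, Finset.sum_mul_sum]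
    rw [← Finset.sum_product']
    rw [map_sum]
    apply Finset.sum_subset (Finset.product_subset_product
      (Finset.range_subset_range.2 (by omega)) (Finset.range_subset_range.2 (by omega)))
    intro p hp hnp
    simp only [Finset.mem_product, Finset.mem_range] at hp hnp
    apply htz
    omega
  have hlhs : PowerSeries.coeff (R := R) d (formalExp (g + h)) =
      ∑ p ∈ P, PowerSeries.coeff (R := R) d (t p.1 p.2) := by
    rw [coeff_formalExp_eq (by simp [map_add, hg, hh]) (by omega : d < B)]
    have hexp : ∀ s : ℕ, E (1 / (Nat.factorial s : ℚ)) * (g + h) ^ s =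
        ∑ j ∈ range (s + 1), t j (s - j) := by
      intro s
      rw [add_pow, Finset.mul_sum]
      apply Finset.sum_congr rfl
      intro j hj
      rw [Finset.mem_range] at hj
      have hj' : j ≤ s := by omega
      have hc : ((s.choose j : ℕ) : PowerSeries R) = E ((s.choose j : ℕ) : ℚ) := by
        simp [hE]
      have key : E (1 / (Nat.factorial s : ℚ)) * E ((s.choose j : ℕ) : ℚ) =
          E (1 / (Nat.factorial j : ℚ)) * E (1 / (Nat.factorial (s - j) : ℚ)) := by
        rw [← map_mul, inv_fact_mul_choose hj', map_mul]
      rw [ht, hc]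
      calc E (1 / (Nat.factorial s : ℚ)) * (g ^ j * h ^ (s - j) * E ((s.choose j : ℕ) : ℚ))
          = (E (1 / (Nat.factorial s : ℚ)) * E ((s.choose j : ℕ) : ℚ)) *
              (g ^ j * h ^ (s - j)) := by ring
        _ = _ := by rw [key]; ring
    rw [Finset.sum_congr rfl (fun s _ => hexp s), map_sum]
    simp only [map_sum]
    rw [Finset.sum_sigma' (range B) (fun s => range (s+1))
      (fun a b => PowerSeries.coeff (R := R) d (t b (a - b)))]
    rw [← Finset.sum_filter_add_sum_filter_not P (fun p => p.1 + p.2 < B)]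
    have hz2 : ∑ p ∈ P.filter (fun p => ¬ p.1 + p.2 < B),
        PowerSeries.coeff (R := R) d (t p.1 p.2) = 0 := by
      apply Finset.sum_eq_zero
      intro p hp
      rw [Finset.mem_filter] at hp
      exact htz _ _ (by omega)
    rw [hz2, add_zero]
    apply Finset.sum_nbij' (fun x => (x.2, x.1 - x.2)) (fun p => ⟨p.1 + p.2, p.1⟩)
    · intro x hx
      simp only [Finset.mem_sigma, Finset.mem_range] at hx
      simp only [Finset.mem_filter, hP, Finset.mem_product, Finset.mem_range]
      omega
    · intro p hp
      simp only [Finset.mem_filter, hP, Finset.mem_product, Finset.mem_range] at hp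
      simp only [Finset.mem_sigma, Finset.mem_range]
      omega
    · intro x hx
      simp only [Finset.mem_sigma, Finset.mem_range] at hx
      ext
      · simp
        omega
      · simp
    · intro p hp
      simp
    · intro x hx
      rfl
  rw [hlhs, hrhs]

lemma formalExp_zero : formalExp (0 : PowerSeries R) = 1 := by
  ext d
  rw [coeff_formalExp]
  rw [Finset.sum_eq_single_of_mem 0 (Finset.mem_range.2 (Nat.succ_pos d))]
  · simp
  · intro s _ hs
    simp [zero_pow hs]

lemma formalExp_sum {ι : Type*} (s : Finset ι) (g : ι → PowerSeries R)
    (hg : ∀ u ∈ s, PowerSeries.constantCoeff (R := R) (g u) = 0) :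
    formalExp (∑ u ∈ s, g u) = ∏ u ∈ s, formalExp (g u) := by
  classical
  induction s using Finset.induction_on with
  | empty => simp [formalExp_zero]
  | insert a t hnotmem ih =>
    rw [Finset.sum_insert hnotmem, Finset.prod_insert hnotmem,
      formalExp_add (hg a (Finset.mem_insert_self a t))
        (by rw [map_sum]
            exact Finset.sum_eq_zero fun u hu => hg u (Finset.mem_insert_of_mem hu)),
      ih (fun u hu => hg u (Finset.mem_insert_of_mem hu))]

lemma coeff_formalExp_of_dvd {w : PowerSeries R} {N b : ℕ} (hw : (X : PowerSeries R) ^ N ∣ w)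
    (hb : b < N) : PowerSeries.coeff (R := R) b (formalExp w) = PowerSeries.coeff (R := R) b 1 := by
  rw [coeff_formalExp]
  rw [Finset.sum_eq_single_of_mem 0 (Finset.mem_range.2 (Nat.succ_pos b))]
  · simp
  · intro s _ hs
    exact coeff_of_X_pow_dvd (Dvd.dvd.mul_left (hw.trans (dvd_pow_self w hs)) _) hb

lemma coeff_formalExp_congr {g h : PowerSeries R} {N : ℕ}
    (hg : PowerSeries.constantCoeff (R := R) g = 0) (hh : PowerSeries.constantCoeff (R := R) h = 0)
    (hN : ∀ e, e < N → PowerSeries.coeff (R := R) e g = PowerSeries.coeff (R := R) e h)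
    {e : ℕ} (he : e < N) :
    PowerSeries.coeff (R := R) e (formalExp g) = PowerSeries.coeff (R := R) e (formalExp h) := by
  have hw : (X : PowerSeries R) ^ N ∣ (g - h) :=
    PowerSeries.X_pow_dvd_iff.mpr fun m hm => by rw [map_sub, hN m hm, sub_self]
  have key : formalExp g = formalExp h * formalExp (g - h) := by
    rw [← formalExp_add hh (by rw [map_sub, hg, hh, sub_self]), add_sub_cancel]
  rw [key, PowerSeries.coeff_mul]
  have : ∀ p ∈ Finset.HasAntidiagonal.antidiagonal e,
      PowerSeries.coeff (R := R) p.1 (formalExp h) * PowerSeries.coeff (R := R) p.2 (formalExp (g - h)) =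
      PowerSeries.coeff (R := R) p.1 (formalExp h) * PowerSeries.coeff (R := R) p.2 (1 : PowerSeries R) := by
    intro p hp
    rw [Finset.HasAntidiagonal.mem_antidiagonal] at hp
    rw [coeff_formalExp_of_dvd hw (by omega)]
  rw [Finset.sum_congr rfl this, ← PowerSeries.coeff_mul, mul_one]

lemma prod_sub_prod_dvd {ι : Type*} (s : Finset ι) (D : PowerSeries R) (a b : ι → PowerSeries R)
    (h : ∀ u ∈ s, D ∣ (a u - b u)) : D ∣ (∏ u ∈ s, a u - ∏ u ∈ s, b u) := by
  classical
  induction s using Finset.induction_on with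
  | empty => simp
  | insert c t hnotmem ih =>
    rw [Finset.prod_insert hnotmem, Finset.prod_insert hnotmem]
    have key : a c * ∏ u ∈ t, a u - b c * ∏ u ∈ t, b u =
        a c * (∏ u ∈ t, a u - ∏ u ∈ t, b u) + (a c - b c) * ∏ u ∈ t, b u := by ring
    rw [key]
    exact dvd_add (Dvd.dvd.mul_left (ih fun u hu => h u (Finset.mem_insert_of_mem hu)) _)
      (Dvd.dvd.mul_right (h c (Finset.mem_insert_self c t)) _)

end Helpers

/-- Multiplicity function of a dependent pi element. -/
def np (d : ℕ) (p : ∀ a ∈ Finset.Icc 1 d, ℕ) : ℕ → ℕ := fun u =>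
  if h : u ∈ Finset.Icc 1 d then p u h else 0

lemma msum_sum {ι : Type*} (s : Finset ι) (M : ι → Multiset ℕ) :
    (∑ u ∈ s, M u).sum = ∑ u ∈ s, (M u).sum := by
  classical
  induction s using Finset.induction_on with
  | empty => simp
  | insert a t hn ih => simp [Finset.sum_insert hn, ih]

lemma mcard_sum {ι : Type*} (s : Finset ι) (M : ι → Multiset ℕ) :
    Multiset.card (∑ u ∈ s, M u) = ∑ u ∈ s, Multiset.card (M u) := by
  classical
  induction s using Finset.induction_on with
  | empty => simp
  | insert a t hn ih => simp [Finset.sum_insert hn, ih]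

/-- The partition associated to a multiplicity function. -/
def partOf (d : ℕ) (p : ∀ a ∈ Finset.Icc 1 d, ℕ) :
    Nat.Partition (∑ u ∈ Finset.Icc 1 d, u * np d p u) where
  parts := ∑ u ∈ Finset.Icc 1 d, Multiset.replicate (np d p u) u
  parts_pos := by
    intro i hi
    rw [Multiset.mem_sum] at hi
    obtain ⟨u, hu, hiu⟩ := hi
    rw [Multiset.eq_of_mem_replicate hiu]
    exact (Finset.mem_Icc.mp hu).1
  parts_sum := by
    rw [msum_sum]
    exact Finset.sum_congr rfl fun u _ => by
      rw [Multiset.sum_replicate, smul_eq_mul, mul_comm]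

lemma count_partOf (d : ℕ) (p : ∀ a ∈ Finset.Icc 1 d, ℕ) (i : ℕ) :
    (partOf d p).parts.count i = np d p i := by
  show Multiset.count i (∑ u ∈ Finset.Icc 1 d, Multiset.replicate (np d p u) u) = np d p i
  rw [Multiset.count_sum']
  have : ∀ u ∈ Finset.Icc 1 d, Multiset.count i (Multiset.replicate (np d p u) u) =
      if u = i then np d p u else 0 := fun u _ => Multiset.count_replicate _ _ _
  rw [Finset.sum_congr rfl this]
  rw [Finset.sum_ite_eq' (Finset.Icc 1 d) i (np d p ·)]
  by_cases hi : i ∈ Finset.Icc 1 d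
  · rw [if_pos hi]
  · rw [if_neg hi, np, dif_neg hi]

section partitionFacts

variable {k d : ℕ}

lemma part_mem_Icc (hkd : k ≤ d) (l : Nat.Partition k) : ∀ i ∈ l.parts, i ∈ Finset.Icc 1 d := by
  intro i hi
  rw [Finset.mem_Icc]
  refine ⟨l.parts_pos hi, le_trans ?_ (le_trans (le_of_eq l.parts_sum) hkd)⟩
  calc i ≤ i + (l.parts.erase i).sum := Nat.le_add_right _ _
    _ = l.parts.sum := by
        rw [← Multiset.sum_cons, Multiset.cons_erase hi]

lemma count_eq_zero_of_gt (l : Nat.Partition k) {u : ℕ}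
    (hu : u ∉ Finset.Icc 1 k) : l.parts.count u = 0 := by
  rw [Multiset.count_eq_zero]
  intro hmem
  exact hu (part_mem_Icc le_rfl l u hmem)

lemma parts_eq_sum_replicate (hkd : k ≤ d) (l : Nat.Partition k) :
    l.parts = ∑ u ∈ Finset.Icc 1 d, Multiset.replicate (l.parts.count u) u := by
  ext i
  rw [Multiset.count_sum']
  have : ∀ u ∈ Finset.Icc 1 d, Multiset.count i (Multiset.replicate (l.parts.count u) u) =
      if u = i then l.parts.count u else 0 := fun u _ => Multiset.count_replicate _ _ _
  rw [Finset.sum_congr rfl this, Finset.sum_ite_eq' (Finset.Icc 1 d) i (l.parts.count ·)]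
  by_cases hi : i ∈ Finset.Icc 1 d
  · rw [if_pos hi]
  · rw [if_neg hi, Multiset.count_eq_zero]
    intro hmem
    exact hi (part_mem_Icc hkd l i hmem)

lemma sum_count_mul (hkd : k ≤ d) (l : Nat.Partition k) :
    ∑ u ∈ Finset.Icc 1 d, u * l.parts.count u = k := by
  calc ∑ u ∈ Finset.Icc 1 d, u * l.parts.count u
      = ∑ u ∈ Finset.Icc 1 d, (Multiset.replicate (l.parts.count u) u).sum :=
        Finset.sum_congr rfl fun u _ => by
          rw [Multiset.sum_replicate, smul_eq_mul, mul_comm]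
    _ = k := by rw [← msum_sum, ← parts_eq_sum_replicate hkd l, l.parts_sum]

lemma card_eq_sum_count (hkd : k ≤ d) (l : Nat.Partition k) :
    Multiset.card l.parts = ∑ u ∈ Finset.Icc 1 d, l.parts.count u := by
  conv_lhs => rw [parts_eq_sum_replicate hkd l]
  rw [mcard_sum]
  exact Finset.sum_congr rfl fun u _ => Multiset.card_replicate _ _

lemma card_le_k (l : Nat.Partition k) : Multiset.card l.parts ≤ k := by
  have h1 := card_eq_sum_count le_rfl l
  have h2 := sum_count_mul le_rfl l
  have h3 : ∑ u ∈ Finset.Icc 1 k, l.parts.count u ≤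
      ∑ u ∈ Finset.Icc 1 k, u * l.parts.count u :=
    Finset.sum_le_sum fun u hu => Nat.le_mul_of_pos_left _ (Finset.mem_Icc.mp hu).1
  omega

lemma count_le_d (hkd : k ≤ d) (l : Nat.Partition k) (u : ℕ) : l.parts.count u ≤ d :=
  le_trans (Multiset.count_le_card u l.parts) (le_trans (card_le_k l) hkd)

end partitionFacts

lemma sigma_part_ext {k k' : ℕ} (l : Nat.Partition k) (l' : Nat.Partition k')
    (h : l.parts = l'.parts) : (⟨k, l⟩ : Σ n, Nat.Partition n) = ⟨k', l'⟩ := by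
  have hk : k = k' := by rw [← l.parts_sum, ← l'.parts_sum, h]
  subst hk
  congr 1
  exact Nat.Partition.ext h

/-- The key weight identity: the partition weight equals the product of the per-part weights. -/
lemma weight_eq {R : Type*} [CommRing R] [Algebra ℚ R] (f : ℕ → PowerSeries R)
    {k d : ℕ} (hkd : k ≤ d) (l : Nat.Partition k) :
    algebraMap ℚ (PowerSeries R) ((-1 : ℚ) ^ (k - Multiset.card l.parts) / zCoef l) *
      ∏ i ∈ Finset.Icc 1 k, f i ^ (l.parts.count i)
    = ∏ u ∈ Finset.Icc 1 d,
        (algebraMap ℚ (PowerSeries R)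
          (((-1 : ℚ) ^ (u - 1) / (u : ℚ)) ^ (l.parts.count u) *
            (1 / (Nat.factorial (l.parts.count u) : ℚ))) * f u ^ (l.parts.count u)) := by
  have hsub : Finset.Icc 1 k ⊆ Finset.Icc 1 d := Finset.Icc_subset_Icc_right hkd
  rw [Finset.prod_mul_distrib, ← map_prod]
  congr 1
  · congr 1
    have hsign : ∑ u ∈ Finset.Icc 1 d, (u - 1) * l.parts.count u =
        k - Multiset.card l.parts := by
      have h1 := sum_count_mul hkd l
      have h2 := card_eq_sum_count hkd l
      have h3 : ∑ u ∈ Finset.Icc 1 d, ((u - 1) * l.parts.count u + l.parts.count u) =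
          ∑ u ∈ Finset.Icc 1 d, u * l.parts.count u :=
        Finset.sum_congr rfl fun u hu => by
          have h1u : 1 ≤ u := (Finset.mem_Icc.mp hu).1
          calc (u - 1) * l.parts.count u + l.parts.count u
              = ((u - 1) + 1) * l.parts.count u := by ring
            _ = u * l.parts.count u := by rw [Nat.sub_add_cancel h1u]
      rw [Finset.sum_add_distrib] at h3
      omega
    have hz : ∏ u ∈ Finset.Icc 1 d,
        ((u : ℚ) ^ (l.parts.count u) * (Nat.factorial (l.parts.count u) : ℚ)) = zCoef l := by
      rw [zCoef]
      exact (Finset.prod_subset hsub fun u _ hnu => by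
        rw [count_eq_zero_of_gt l hnu]; simp).symm
    symm
    calc ∏ u ∈ Finset.Icc 1 d, (((-1 : ℚ) ^ (u - 1) / (u : ℚ)) ^ (l.parts.count u) *
            (1 / (Nat.factorial (l.parts.count u) : ℚ)))
        = ∏ u ∈ Finset.Icc 1 d, ((-1 : ℚ) ^ ((u - 1) * l.parts.count u) *
            ((u : ℚ) ^ (l.parts.count u) * (Nat.factorial (l.parts.count u) : ℚ))⁻¹) := by
          refine Finset.prod_congr rfl fun u _ => ?_
          rw [div_pow, ← pow_mul, mul_inv]
          ring
      _ = (-1 : ℚ) ^ (∑ u ∈ Finset.Icc 1 d, (u - 1) * l.parts.count u) *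
            (∏ u ∈ Finset.Icc 1 d,
              ((u : ℚ) ^ (l.parts.count u) * (Nat.factorial (l.parts.count u) : ℚ)))⁻¹ := by
          rw [Finset.prod_mul_distrib, Finset.prod_pow_eq_pow_sum, Finset.prod_inv_distrib]
      _ = (-1 : ℚ) ^ (k - Multiset.card l.parts) / zCoef l := by
          rw [hsign, hz, div_eq_mul_inv]
  · exact Finset.prod_subset hsub fun u _ hnu => by
      rw [count_eq_zero_of_gt l hnu, pow_zero]

/-- The per-part factor in the product expansion of the exponential. -/
noncomputable def tfac {R : Type*} [CommRing R] [Algebra ℚ R] (f : ℕ → PowerSeries R)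
    (u m : ℕ) : PowerSeries R :=
  algebraMap ℚ (PowerSeries R)
    (((-1 : ℚ) ^ (u - 1) / (u : ℚ)) ^ m * (1 / (Nat.factorial m : ℚ))) * f u ^ m

lemma weight_eq' {R : Type*} [CommRing R] [Algebra ℚ R] (f : ℕ → PowerSeries R)
    {k d : ℕ} (hkd : k ≤ d) (l : Nat.Partition k) :
    algebraMap ℚ (PowerSeries R) ((-1 : ℚ) ^ (k - Multiset.card l.parts) / zCoef l) *
      ∏ i ∈ Finset.Icc 1 k, f i ^ (l.parts.count i)
    = ∏ u ∈ Finset.Icc 1 d, tfac f u (l.parts.count u) := by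
  simp only [tfac]
  exact weight_eq f hkd l

lemma tfac_dvd {R : Type*} [CommRing R] [Algebra ℚ R] (f : ℕ → PowerSeries R)
    (hf : ∀ n, 1 ≤ n → (PowerSeries.X : PowerSeries R) ^ n ∣ f n) {u : ℕ} (hu : 1 ≤ u)
    (m : ℕ) : (X : PowerSeries R) ^ (u * m) ∣ tfac f u m := by
  apply Dvd.dvd.mul_left
  rw [pow_mul]
  exact pow_dvd_pow_of_dvd (hf u hu) m

theorem generating_series_number_partitions (R : Type*) [CommRing R] [Algebra ℚ R]
    (f : ℕ → PowerSeries R) (hf : ∀ n, 1 ≤ n → (PowerSeries.X : PowerSeries R) ^ n ∣ f n) :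
    1 + seriesSum (fun k =>
        if k = 0 then 0 else
          ∑ l : Nat.Partition k,
            algebraMap ℚ (PowerSeries R) ((-1 : ℚ) ^ (k - l.parts.card) / zCoef l) *
              ∏ i ∈ Finset.Icc 1 k, f i ^ (l.parts.count i))
      = formalExp (seriesSum (fun u =>
          if u = 0 then 0 else
            algebraMap ℚ (PowerSeries R) ((-1 : ℚ) ^ (u - 1) / (u : ℚ)) * f u)) := by
  classical
  ext d
  set E := algebraMap ℚ (PowerSeries R) with hE
  set Sset : Finset (Σ k, Nat.Partition k) :=
    (range (d+1)).sigma (fun k => (Finset.univ : Finset (Nat.Partition k))) with hSset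
  set Pset : Finset (∀ a ∈ Finset.Icc 1 d, ℕ) :=
    ((Finset.Icc 1 d).pi (fun _ => range (d+1))).filter
      (fun p => ∑ u ∈ Finset.Icc 1 d, u * np d p u ≤ d) with hPset
  -- LHS
  have hLHS : (PowerSeries.coeff (R := R) d) (1 + seriesSum (fun k =>
        if k = 0 then 0 else
          ∑ l : Nat.Partition k,
            E ((-1 : ℚ) ^ (k - l.parts.card) / zCoef l) *
              ∏ i ∈ Finset.Icc 1 k, f i ^ (l.parts.count i)))
      = ∑ x ∈ Sset, (PowerSeries.coeff (R := R) d)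
          (∏ u ∈ Finset.Icc 1 d, tfac f u (x.2.parts.count u)) := by
    rw [map_add, coeff_seriesSum, hSset, Finset.sum_sigma]
    have h0mem : (0:ℕ) ∈ range (d+1) := Finset.mem_range.2 (Nat.succ_pos d)
    rw [← Finset.add_sum_erase _ _ h0mem, ← Finset.add_sum_erase _ _ h0mem]
    have hF0 : (PowerSeries.coeff (R := R) d) (if (0:ℕ) = 0 then (0 : PowerSeries R) else
        ∑ l : Nat.Partition 0, E ((-1 : ℚ) ^ (0 - Multiset.card l.parts) / zCoef l) *
          ∏ i ∈ Finset.Icc 1 0, f i ^ (l.parts.count i)) = 0 := by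
      rw [if_pos rfl, map_zero]
    have hG0 : (∑ l : Nat.Partition 0, (PowerSeries.coeff (R := R) d)
          (∏ u ∈ Finset.Icc 1 d, tfac f u (Multiset.count u (⟨0, l⟩ : Σ k, Nat.Partition k).snd.parts)))
        = (PowerSeries.coeff (R := R) d) (1 : PowerSeries R) := by
      have hIcc0 : Finset.Icc 1 0 = (∅ : Finset ℕ) := Finset.Icc_eq_empty (by omega)
      rw [Finset.univ_unique, Finset.sum_singleton]
      congr 1
      rw [← weight_eq' f (Nat.zero_le d) (default : Nat.Partition 0), hIcc0]
      have hz : zCoef (default : Nat.Partition 0) = 1 := by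
        rw [zCoef, hIcc0, Finset.prod_empty]
      rw [hz]
      simp [hE]
    have hFe : ∑ k ∈ (range (d+1)).erase 0, (PowerSeries.coeff (R := R) d) (if k = 0 then (0 : PowerSeries R) else
        ∑ l : Nat.Partition k, E ((-1 : ℚ) ^ (k - Multiset.card l.parts) / zCoef l) *
          ∏ i ∈ Finset.Icc 1 k, f i ^ (l.parts.count i))
        = ∑ k ∈ (range (d+1)).erase 0, ∑ l : Nat.Partition k, (PowerSeries.coeff (R := R) d)
          (∏ u ∈ Finset.Icc 1 d, tfac f u (Multiset.count u (⟨k, l⟩ : Σ k, Nat.Partition k).snd.parts)) := by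
      refine Finset.sum_congr rfl fun k hk => ?_
      have hk0 : k ≠ 0 := Finset.ne_of_mem_erase hk
      have hkd : k ≤ d := by
        have := Finset.mem_range.mp (Finset.mem_of_mem_erase hk); omega
      rw [if_neg hk0, map_sum]
      refine Finset.sum_congr rfl fun l _ => ?_
      exact congrArg _ (weight_eq' f hkd l)
    rw [hF0, hG0, hFe]
    ring
  rw [hLHS]
  -- RHS
  set B : ℕ → PowerSeries R := fun u =>
    if u = 0 then 0 else E ((-1 : ℚ) ^ (u - 1) / (u : ℚ)) * f u with hB
  have hXB : ∀ u, (X : PowerSeries R) ^ u ∣ B u := by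
    intro u
    by_cases hu : u = 0
    · simp [hB, hu]
    · rw [hB]
      simp only [if_neg hu]
      exact Dvd.dvd.mul_left (hf u (Nat.one_le_iff_ne_zero.2 hu)) _
  have hfc : ∀ u ∈ Finset.Icc 1 d,
      PowerSeries.constantCoeff (R := R) (E ((-1 : ℚ) ^ (u - 1) / (u : ℚ)) * f u) = 0 := by
    intro u hu
    have h1u : 1 ≤ u := (Finset.mem_Icc.mp hu).1
    have hcf : PowerSeries.constantCoeff (R := R) (f u) = 0 := by
      have := coeff_of_X_pow_dvd (hf u h1u) h1u
      rwa [PowerSeries.coeff_zero_eq_constantCoeff] at this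
    rw [map_mul, hcf, mul_zero]
  have hg0 : PowerSeries.constantCoeff (R := R) (seriesSum B) = 0 := by
    rw [← PowerSeries.coeff_zero_eq_constantCoeff_apply, coeff_seriesSum]
    simp [hB]
  set G : PowerSeries R := ∑ u ∈ Finset.Icc 1 d, E ((-1 : ℚ) ^ (u - 1) / (u : ℚ)) * f u with hG
  have hGc : PowerSeries.constantCoeff (R := R) G = 0 := by
    rw [hG, map_sum]
    exact Finset.sum_eq_zero hfc
  have hcong : ∀ e, e < d + 1 →
      PowerSeries.coeff (R := R) e (seriesSum B) = PowerSeries.coeff (R := R) e G := by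
    intro e he
    rw [coeff_seriesSum_eq hXB he]
    congr 1
    have hrange : range (d+1) = insert 0 (Finset.Icc 1 d) := by
      ext x; simp [Finset.mem_Icc]; omega
    rw [hrange, Finset.sum_insert (by simp), hG]
    have hB0 : B 0 = 0 := rfl
    rw [hB0, zero_add]
    refine Finset.sum_congr rfl fun u hu => ?_
    have h1u : 1 ≤ u := (Finset.mem_Icc.mp hu).1
    simp only [hB]
    rw [if_neg (by omega : u ≠ 0)]
  rw [coeff_formalExp_congr hg0 hGc hcong (Nat.lt_succ_self d), hG,
    formalExp_sum _ _ hfc]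
  -- replace each exponential factor by its truncation
  have hdiff : ∀ u ∈ Finset.Icc 1 d, (X : PowerSeries R) ^ (d+1) ∣
      (formalExp (E ((-1 : ℚ) ^ (u - 1) / (u : ℚ)) * f u) - ∑ s ∈ range (d+1), tfac f u s) := by
    intro u hu
    rw [PowerSeries.X_pow_dvd_iff]
    intro m hm
    rw [map_sub, coeff_formalExp_eq (hfc u hu) hm, sub_eq_zero]
    congr 1
    refine Finset.sum_congr rfl fun s _ => ?_
    rw [tfac, mul_pow, ← map_pow, ← mul_assoc, ← map_mul,
      mul_comm (1 / (Nat.factorial s : ℚ)) _]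
  have hR2 : (PowerSeries.coeff (R := R) d) (∏ u ∈ Finset.Icc 1 d,
        formalExp (E ((-1 : ℚ) ^ (u - 1) / (u : ℚ)) * f u)) =
      (PowerSeries.coeff (R := R) d) (∏ u ∈ Finset.Icc 1 d, ∑ s ∈ range (d+1), tfac f u s) := by
    have h0 := coeff_of_X_pow_dvd
      (prod_sub_prod_dvd (Finset.Icc 1 d) _ _ _ hdiff) (Nat.lt_succ_self d)
    rw [map_sub, sub_eq_zero] at h0
    exact h0
  rw [hR2, Finset.prod_sum, map_sum]
  have hattach : ∀ p ∈ (Finset.Icc 1 d).pi (fun _ => range (d+1)),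
      ∏ x ∈ (Finset.Icc 1 d).attach, tfac f x.1 (p x.1 x.2) =
      ∏ u ∈ Finset.Icc 1 d, tfac f u (np d p u) := by
    intro p hp
    rw [← Finset.prod_attach (Finset.Icc 1 d) (fun u => tfac f u (np d p u))]
    exact Finset.prod_congr rfl fun x _ => by rw [np]; rw [dif_pos x.2]
  rw [Finset.sum_congr rfl (fun p hp => congrArg (PowerSeries.coeff (R := R) d) (hattach p hp))]
  rw [← Finset.sum_filter_add_sum_filter_not ((Finset.Icc 1 d).pi (fun _ => range (d+1)))
    (fun p => ∑ u ∈ Finset.Icc 1 d, u * np d p u ≤ d)]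
  have hzero : ∑ p ∈ ((Finset.Icc 1 d).pi (fun _ => range (d+1))).filter
      (fun p => ¬ ∑ u ∈ Finset.Icc 1 d, u * np d p u ≤ d),
      (PowerSeries.coeff (R := R) d) (∏ u ∈ Finset.Icc 1 d, tfac f u (np d p u)) = 0 := by
    apply Finset.sum_eq_zero
    intro p hp
    rw [Finset.mem_filter] at hp
    apply coeff_of_X_pow_dvd (n := ∑ u ∈ Finset.Icc 1 d, u * np d p u) _ (by omega)
    rw [← Finset.prod_pow_eq_pow_sum]
    exact Finset.prod_dvd_prod_of_dvd _ _
      (fun u hu => tfac_dvd f hf (Finset.mem_Icc.mp hu).1 (np d p u))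
  rw [hzero, add_zero]
  -- the bijection
  apply Finset.sum_nbij' (fun x => (fun i _ => x.2.parts.count i : ∀ a ∈ Finset.Icc 1 d, ℕ))
    (fun p => (⟨∑ u ∈ Finset.Icc 1 d, u * np d p u, partOf d p⟩ : Σ k, Nat.Partition k))
  · -- forward membership
    rintro ⟨k, l⟩ hx
    have hkd : k ≤ d := by
      rw [hSset, Finset.mem_sigma, Finset.mem_range] at hx
      exact Nat.lt_succ_iff.mp hx.1
    rw [Finset.mem_filter]
    constructor
    · rw [Finset.mem_pi]
      intro a ha
      rw [Finset.mem_range]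
      exact Nat.lt_succ_of_le (count_le_d hkd l a)
    · have : ∑ u ∈ Finset.Icc 1 d, u * np d (fun i _ => l.parts.count i) u =
          ∑ u ∈ Finset.Icc 1 d, u * l.parts.count u :=
        Finset.sum_congr rfl fun u hu => by rw [np, dif_pos hu]
      rw [this, sum_count_mul hkd l]
      exact hkd
  · -- backward membership
    intro p hp
    rw [Finset.mem_filter] at hp
    rw [hSset, Finset.mem_sigma, Finset.mem_range]
    exact ⟨Nat.lt_succ_of_le hp.2, Finset.mem_univ _⟩
  · -- left inverse
    rintro ⟨k, l⟩ hx
    have hkd : k ≤ d := by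
      rw [hSset, Finset.mem_sigma, Finset.mem_range] at hx
      exact Nat.lt_succ_iff.mp hx.1
    apply sigma_part_ext
    ext i
    rw [count_partOf]
    by_cases hi : i ∈ Finset.Icc 1 d
    · rw [np, dif_pos hi]
    · rw [np, dif_neg hi]
      rw [eq_comm, Multiset.count_eq_zero]
      intro hmem
      exact hi (part_mem_Icc hkd l i hmem)
  · -- right inverse
    intro p hp
    funext i hi
    rw [count_partOf, np, dif_pos hi]
  · -- values agree
    rintro ⟨k, l⟩ hx
    congr 1
    exact Finset.prod_congr rfl fun u hu => by rw [np, dif_pos hu]
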